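/- Existence of hyperbolic framed curves: for every smooth map (m,n,a,b) : I → ℝ⁴ on an open interval I ⊆ ℝ, there exists a hyperbolic framed curve (γ,v₁,v₂) : I → H³ × Δ₅ whose curvature is (m,n,a,b). -/

import Mathlib

noncomputable section

open Real Set

def mink (x y : Fin 4 → ℝ) : ℝ :=
  -(x 0 * y 0) + x 1 * y 1 + x 2 * y 2 + x 3 * y 3

def H3 : Set (Fin 4 → ℝ) := {x | mink x x = -1}

def dS3 : Set (Fin 4 → ℝ) := {x | mink x x = 1}

def lcross (x y z : Fin 4 → ℝ) : Fin 4 → ℝ := fun i =>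
  (if i = 0 then (-1 : ℝ) else 1) *
    (Matrix.of ![(fun j => if j = i then (1 : ℝ) else 0), x, y, z]).det

def IsHypFramed (I : Set ℝ) (γ v₁ v₂ : ℝ → Fin 4 → ℝ) : Prop :=
  ContDiffOn ℝ (⊤ : ℕ∞) γ I ∧ ContDiffOn ℝ (⊤ : ℕ∞) v₁ I ∧ ContDiffOn ℝ (⊤ : ℕ∞) v₂ I ∧
  ∀ t ∈ I,
    mink (γ t) (γ t) = -1 ∧ mink (v₁ t) (v₁ t) = 1 ∧ mink (v₂ t) (v₂ t) = 1 ∧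
    mink (v₁ t) (v₂ t) = 0 ∧ mink (γ t) (v₁ t) = 0 ∧ mink (γ t) (v₂ t) = 0 ∧
    mink (deriv γ t) (v₁ t) = 0 ∧ mink (deriv γ t) (v₂ t) = 0

def HasCurv (I : Set ℝ) (γ v₁ v₂ : ℝ → Fin 4 → ℝ) (m n a b : ℝ → ℝ) : Prop :=
  ∀ t ∈ I,
    m t = mink (deriv γ t) (lcross (γ t) (v₁ t) (v₂ t)) ∧
    n t = mink (deriv v₁ t) (v₂ t) ∧
    a t = mink (deriv v₁ t) (lcross (γ t) (v₁ t) (v₂ t)) ∧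
    b t = mink (deriv v₂ t) (lcross (γ t) (v₁ t) (v₂ t))

def SingPt (f : ℝ × ℝ → Fin 4 → ℝ) (p : ℝ × ℝ) : Prop :=
  LinearMap.rank (fderiv ℝ f p).toLinearMap < 2

def AEquivAt (X : Set (Fin 4 → ℝ)) (f : ℝ × ℝ → Fin 4 → ℝ) (p : ℝ × ℝ)
    (g : ℝ → ℝ → Fin 3 → ℝ) : Prop :=
  ∃ (U : Set (ℝ × ℝ)) (φ φi : ℝ × ℝ → ℝ × ℝ)
    (V : Set (Fin 4 → ℝ)) (ψ : (Fin 4 → ℝ) → Fin 3 → ℝ) (ψi : (Fin 3 → ℝ) → Fin 4 → ℝ),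
    IsOpen U ∧ p ∈ U ∧ φ p = 0 ∧ ContDiffOn ℝ (⊤ : ℕ∞) φ U ∧
    IsOpen (φ '' U) ∧ ContDiffOn ℝ (⊤ : ℕ∞) φi (φ '' U) ∧ (∀ q ∈ U, φi (φ q) = q) ∧
    IsOpen V ∧ f p ∈ V ∧ ψ (f p) = 0 ∧ ContDiffOn ℝ (⊤ : ℕ∞) ψ V ∧
    IsOpen (ψ '' (V ∩ X)) ∧ ContDiffOn ℝ (⊤ : ℕ∞) ψi (ψ '' (V ∩ X)) ∧
    (∀ x ∈ V ∩ X, ψi (ψ x) = x) ∧ (∀ y ∈ ψ '' (V ∩ X), ψi y ∈ X) ∧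
    MapsTo f U V ∧ ∀ q ∈ U, ψ (f q) = g (φ q).1 (φ q).2

def IsCuspidalEdge (X : Set (Fin 4 → ℝ)) (f : ℝ × ℝ → Fin 4 → ℝ) (p : ℝ × ℝ) : Prop :=
  AEquivAt X f p fun u v => ![u, v ^ 2, v ^ 3]

def IsSwallowtail (X : Set (Fin 4 → ℝ)) (f : ℝ × ℝ → Fin 4 → ℝ) (p : ℝ × ℝ) : Prop :=
  AEquivAt X f p fun u v => ![u, 4 * v ^ 3 + 2 * u * v, 3 * v ^ 4 + u * v ^ 2]

def IsCuspidalBeaks (X : Set (Fin 4 → ℝ)) (f : ℝ × ℝ → Fin 4 → ℝ) (p : ℝ × ℝ) : Prop :=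
  AEquivAt X f p fun u v => ![u, 2 * v ^ 3 - u ^ 2 * v, 3 * v ^ 4 - u ^ 2 * v ^ 2]

def IsCuspidalLips (X : Set (Fin 4 → ℝ)) (f : ℝ × ℝ → Fin 4 → ℝ) (p : ℝ × ℝ) : Prop :=
  AEquivAt X f p fun u v => ![u, 2 * v ^ 3 + u ^ 2 * v, 3 * v ^ 4 + u ^ 2 * v ^ 2]

def IsCuspidalCrossCap (X : Set (Fin 4 → ℝ)) (f : ℝ × ℝ → Fin 4 → ℝ) (p : ℝ × ℝ) : Prop :=
  AEquivAt X f p fun u v => ![u, v ^ 2, u * v ^ 3]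

def CurveAEquivAt (X : Set (Fin 4 → ℝ)) (c : ℝ → Fin 4 → ℝ) (t₀ : ℝ)
    (g : ℝ → Fin 3 → ℝ) : Prop :=
  ∃ (U : Set ℝ) (φ φi : ℝ → ℝ)
    (V : Set (Fin 4 → ℝ)) (ψ : (Fin 4 → ℝ) → Fin 3 → ℝ) (ψi : (Fin 3 → ℝ) → Fin 4 → ℝ),
    IsOpen U ∧ t₀ ∈ U ∧ φ t₀ = 0 ∧ ContDiffOn ℝ (⊤ : ℕ∞) φ U ∧
    IsOpen (φ '' U) ∧ ContDiffOn ℝ (⊤ : ℕ∞) φi (φ '' U) ∧ (∀ q ∈ U, φi (φ q) = q) ∧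
    IsOpen V ∧ c t₀ ∈ V ∧ ψ (c t₀) = 0 ∧ ContDiffOn ℝ (⊤ : ℕ∞) ψ V ∧
    IsOpen (ψ '' (V ∩ X)) ∧ ContDiffOn ℝ (⊤ : ℕ∞) ψi (ψ '' (V ∩ X)) ∧
    (∀ x ∈ V ∩ X, ψi (ψ x) = x) ∧ (∀ y ∈ ψ '' (V ∩ X), ψi y ∈ X) ∧
    MapsTo c U V ∧ ∀ q ∈ U, ψ (c q) = g (φ q)

def Has234Cusp (X : Set (Fin 4 → ℝ)) (c : ℝ → Fin 4 → ℝ) (t₀ : ℝ) : Prop :=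
  CurveAEquivAt X c t₀ fun s => ![s ^ 2, s ^ 3, s ^ 4]


section ODEAux

variable {E : Type*} [NormedAddCommGroup E] [NormedSpace ℝ E]


def ballRetract (R : ℝ) (x : E) : E := if ‖x‖ ≤ R then x else (R / ‖x‖) • x

lemma ballRetract_eq_self {R : ℝ} {x : E} (h : ‖x‖ ≤ R) : ballRetract R x = x := if_pos h

lemma ballRetract_norm_le_self {R : ℝ} (hR : 0 ≤ R) (x : E) :
    ‖ballRetract R x‖ ≤ ‖x‖ := by
  unfold ballRetract
  split_ifs with h
  · exact le_refl _
  · push_neg at h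
    have hx : 0 < ‖x‖ := lt_of_le_of_lt hR h
    rw [norm_smul, Real.norm_eq_abs, abs_of_nonneg (div_nonneg hR hx.le)]
    rw [div_mul_eq_mul_div, mul_div_assoc, div_self hx.ne', mul_one]
    exact h.le

lemma ballRetract_norm_le {R : ℝ} (hR : 0 ≤ R) (x : E) : ‖ballRetract R x‖ ≤ R := by
  unfold ballRetract
  split_ifs with h
  · exact h
  · push_neg at h
    have hx : 0 < ‖x‖ := lt_of_le_of_lt hR h
    rw [norm_smul, Real.norm_eq_abs, abs_of_nonneg (div_nonneg hR hx.le)]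
    rw [div_mul_eq_mul_div, mul_div_assoc, div_self hx.ne', mul_one]

lemma ballRetract_dist_aux {R : ℝ} (hR : 0 ≤ R) (x y : E) (hxy : ‖x‖ ≤ ‖y‖) :
    ‖ballRetract R x - ballRetract R y‖ ≤ 2 * ‖x - y‖ := by
  by_cases hy : ‖y‖ ≤ R
  · rw [ballRetract_eq_self (hxy.trans hy), ballRetract_eq_self hy]
    nlinarith [norm_nonneg (x - y)]
  push_neg at hy
  have hy0 : 0 < ‖y‖ := lt_of_le_of_lt hR hy
  have key : ‖y - (R / ‖y‖) • y‖ = ‖y‖ - R := by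
    have : y - (R / ‖y‖) • y = (1 - R / ‖y‖) • y := by
      rw [sub_smul, one_smul]
    rw [this, norm_smul, Real.norm_eq_abs, abs_of_nonneg]
    · field_simp
    · rw [sub_nonneg]
      exact (div_le_one hy0).2 hy.le
  by_cases hx : ‖x‖ ≤ R
  · rw [ballRetract_eq_self hx]
    unfold ballRetract
    rw [if_neg (not_le.2 hy)]
    calc ‖x - (R / ‖y‖) • y‖ ≤ ‖x - y‖ + ‖y - (R / ‖y‖) • y‖ := by
          have := norm_sub_le_norm_sub_add_norm_sub x y ((R / ‖y‖) • y)
          linarith [norm_sub_le (x - y) (y - (R / ‖y‖) • y)]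
      _ ≤ ‖x - y‖ + (‖y‖ - ‖x‖) := by rw [key]; linarith
      _ ≤ ‖x - y‖ + ‖y - x‖ := by linarith [norm_sub_norm_le y x]
      _ = 2 * ‖x - y‖ := by rw [norm_sub_rev y x]; ring
  · push_neg at hx
    have hx0 : 0 < ‖x‖ := lt_of_le_of_lt hR hx
    unfold ballRetract
    rw [if_neg (not_le.2 hx), if_neg (not_le.2 hy)]
    calc ‖(R / ‖x‖) • x - (R / ‖y‖) • y‖
        ≤ ‖(R / ‖x‖) • x - (R / ‖x‖) • y‖ + ‖(R / ‖x‖) • y - (R / ‖y‖) • y‖ := by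
          have := norm_sub_le_norm_sub_add_norm_sub ((R / ‖x‖) • x) ((R / ‖x‖) • y) ((R / ‖y‖) • y)
          linarith
      _ = (R / ‖x‖) * ‖x - y‖ + |R / ‖x‖ - R / ‖y‖| * ‖y‖ := by
          rw [← smul_sub, ← sub_smul, norm_smul, norm_smul, Real.norm_eq_abs, Real.norm_eq_abs,
            abs_of_nonneg (div_nonneg hR hx0.le)]
      _ ≤ 1 * ‖x - y‖ + 1 * ‖x - y‖ := by
          have h1 : R / ‖x‖ ≤ 1 := (div_le_one hx0).2 hx.le
          have h2 : |R / ‖x‖ - R / ‖y‖| * ‖y‖ ≤ ‖x - y‖ := by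
            have : R / ‖x‖ - R / ‖y‖ = R * (‖y‖ - ‖x‖) / (‖x‖ * ‖y‖) := by field_simp
            rw [this, abs_div, abs_mul, abs_of_nonneg hR, abs_of_nonneg (by positivity : (0:ℝ) ≤ ‖x‖ * ‖y‖)]
            calc R * |‖y‖ - ‖x‖| / (‖x‖ * ‖y‖) * ‖y‖ = (R / ‖x‖) * |‖y‖ - ‖x‖| := by field_simp
              _ ≤ 1 * |‖y‖ - ‖x‖| := by
                  apply mul_le_mul_of_nonneg_right h1 (abs_nonneg _)
              _ ≤ ‖x - y‖ := by rw [one_mul]; rw [abs_sub_comm]; exact abs_norm_sub_norm_le x y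
          have hn : (0:ℝ) ≤ ‖x - y‖ := norm_nonneg _
          nlinarith
      _ = 2 * ‖x - y‖ := by ring

lemma ballRetract_lipschitz {R : ℝ} (hR : 0 ≤ R) :
    LipschitzWith 2 (ballRetract (E := E) R) := by
  apply LipschitzWith.of_dist_le_mul
  intro x y
  rcases le_total ‖x‖ ‖y‖ with h | h
  · simpa [dist_eq_norm] using ballRetract_dist_aux hR x y h
  · rw [dist_comm, dist_comm x y]
    simpa [dist_eq_norm] using ballRetract_dist_aux hR y x h



lemma linear_ode_exists_Icc [CompleteSpace E] {c d t₀ : ℝ} (hct : c ≤ t₀) (htd : t₀ ≤ d)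
    (A : ℝ → E →L[ℝ] E) (hA : ContinuousOn A (Icc c d)) (x₀ : E) :
    ∃ f : ℝ → E, f t₀ = x₀ ∧ ∀ t ∈ Icc c d, HasDerivWithinAt f (A t (f t)) (Icc c d) t := by
  obtain ⟨C0, hC0⟩ := isCompact_Icc.exists_bound_of_continuousOn hA
  set K : ℝ := max C0 0 with hK
  have hK0 : 0 ≤ K := le_max_right _ _
  have hAK : ∀ s ∈ Icc c d, ‖A s‖ ≤ K := fun s hs => le_max_of_le_left (hC0 s hs)
  set Rm : ℝ := (‖x₀‖ + 1) * exp (K * (d - c)) with hRm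
  have hexp1 : 1 ≤ exp (K * (d - c)) := by
    rw [← Real.exp_zero]
    exact exp_le_exp.2 (by nlinarith)
  have hRm1 : ‖x₀‖ + 1 ≤ Rm := by
    have h0 : 0 < ‖x₀‖ + 1 := by positivity
    nlinarith
  have hRm0 : 0 ≤ Rm := by positivity
  set v : ℝ → E → E := fun s x => A s (ballRetract Rm x) with hv
  have hnorm : ∀ s ∈ Icc c d, ∀ x : E, ‖v s x‖ ≤ K * Rm := by
    intro s hs x
    calc ‖A s (ballRetract Rm x)‖ ≤ ‖A s‖ * ‖ballRetract Rm x‖ := (A s).le_opNorm _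
      _ ≤ K * Rm := by
          have := ballRetract_norm_le hRm0 x
          have := hAK s hs
          have := norm_nonneg (ballRetract Rm x)
          nlinarith [norm_nonneg (A s)]
  have hdc : 0 ≤ d - c := by linarith
  have hpl : IsPicardLindelof v (tmin := c) (tmax := d) ⟨t₀, hct, htd⟩ x₀
      (K * Rm * (d - c) + 1).toNNReal 0 (K * Rm).toNNReal (2*K).toNNReal := by
    constructor
    · intro s hs
      apply LipschitzWith.lipschitzOnWith
      apply LipschitzWith.weaken ((A s).lipschitz.comp (ballRetract_lipschitz hRm0))
      rw [← NNReal.coe_le_coe]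
      push_cast
      rw [Real.coe_toNNReal _ (by positivity)]
      have := hAK s hs
      have := norm_nonneg (A s)
      nlinarith
    · intro x _
      exact (hA.clm_apply continuousOn_const)
    · intro s hs x _
      rw [Real.coe_toNNReal _ (by positivity)]
      exact hnorm s hs x
    · have h1 : max (d - t₀) (t₀ - c) ≤ d - c := by
        apply max_le <;> linarith
      simp only [NNReal.coe_zero, sub_zero, tsub_zero]
      rw [Real.coe_toNNReal _ (by positivity), Real.coe_toNNReal _ (by positivity)]
      nlinarith [mul_nonneg hK0 hRm0, mul_le_mul_of_nonneg_left h1 (mul_nonneg hK0 hRm0)]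
  obtain ⟨g, hg0, hg⟩ := hpl.exists_eq_forall_mem_Icc_hasDerivWithinAt₀
  replace hg0 : g t₀ = x₀ := hg0
  have hgc : ContinuousOn g (Icc c d) := fun s hs => (hg s hs).continuousWithinAt
  -- a priori bound
  have hvnorm : ∀ s ∈ Icc c d, ∀ x : E, ‖v s x‖ ≤ K * ‖x‖ + 0 := by
    intro s hs x
    calc ‖A s (ballRetract Rm x)‖ ≤ ‖A s‖ * ‖ballRetract Rm x‖ := (A s).le_opNorm _
      _ ≤ K * ‖x‖ + 0 := by
          have h1 := ballRetract_norm_le_self hRm0 x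
          have h2 := hAK s hs
          have h3 := norm_nonneg (ballRetract Rm x)
          nlinarith [norm_nonneg (A s), norm_nonneg x]
  have bound_right : ∀ s ∈ Icc t₀ d, ‖g s‖ ≤ Rm := by
    intro s hs
    have h := norm_le_gronwallBound_of_norm_deriv_right_le (f := g)
      (f' := fun u => v u (g u)) (δ := ‖x₀‖ + 1) (K := K) (ε := 0) (a := t₀) (b := d)
      (hgc.mono (Icc_subset_Icc_left hct)) ?_ (by rw [hg0]; linarith) ?_ s hs
    · rw [gronwallBound_ε0] at h
      refine h.trans ?_
      have h1 : K * (s - t₀) ≤ K * (d - c) := by nlinarith [hs.1, hs.2]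
      have h2 : exp (K * (s - t₀)) ≤ exp (K * (d - c)) := exp_le_exp.2 h1
      have h0 : 0 < ‖x₀‖ + 1 := by positivity
      rw [hRm]
      nlinarith
    · intro u hu
      have humem : u ∈ Icc c d := ⟨hct.trans hu.1, hu.2.le⟩
      refine (hg u humem).mono_of_mem_nhdsWithin ?_
      rw [mem_nhdsWithin]
      exact ⟨Iio d, isOpen_Iio, hu.2, fun w hw => ⟨(hct.trans hu.1).trans hw.2, hw.1.le⟩⟩
    · intro u hu
      exact hvnorm u ⟨hct.trans hu.1, hu.2.le⟩ (g u)
  have bound_left : ∀ s ∈ Icc c t₀, ‖g s‖ ≤ Rm := by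
    intro s₀ hs₀
    set h : ℝ → E := fun s => g (-s) with hh
    have key : ∀ s ∈ Icc (-t₀) (-c), ‖h s‖ ≤ Rm := by
      intro s hs
      have hres := norm_le_gronwallBound_of_norm_deriv_right_le (f := h)
        (f' := fun u => -(v (-u) (g (-u)))) (δ := ‖x₀‖ + 1) (K := K) (ε := 0)
        (a := -t₀) (b := -c) ?_ ?_ ?_ ?_ s hs
      · rw [gronwallBound_ε0] at hres
        refine hres.trans ?_
        have h1 : K * (s - -t₀) ≤ K * (d - c) := by nlinarith [hs.1, hs.2]
        have h2 : exp (K * (s - -t₀)) ≤ exp (K * (d - c)) := exp_le_exp.2 h1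
        have h0 : 0 < ‖x₀‖ + 1 := by positivity
        rw [hRm]
        nlinarith
      · apply hgc.comp continuousOn_neg
        intro u hu
        exact ⟨by linarith [hu.2], by linarith [hu.1, htd]⟩
      · intro u hu
        have humem : -u ∈ Icc c d := ⟨by linarith [hu.2], by linarith [hu.1, htd]⟩
        have hder : HasDerivWithinAt g (v (-u) (g (-u))) (Iic (-u)) (-u) := by
          refine (hg (-u) humem).mono_of_mem_nhdsWithin ?_
          rw [mem_nhdsWithin]
          refine ⟨Ioi c, isOpen_Ioi, lt_neg.mp hu.2, fun w hw => ⟨hw.1.le, hw.2.trans ?_⟩⟩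
          linarith [hu.1, htd]
        have hmaps : MapsTo Neg.neg (Ici u) (Iic (-u)) := fun w hw => by
          simp only [mem_Iic]; exact neg_le_neg hw
        have := HasFDerivWithinAt.comp_hasDerivWithinAt u hder
          (hasDerivAt_neg u).hasDerivWithinAt hmaps
        simpa [hh, Function.comp_def] using this
      · rw [hh]
        simp only [neg_neg]
        rw [hg0]
        linarith
      · intro u hu
        rw [norm_neg]
        exact hvnorm (-u) ⟨by linarith [hu.2], by linarith [hu.1, htd]⟩ (g (-u))
    have := key (-s₀) ⟨neg_le_neg hs₀.2, neg_le_neg hs₀.1⟩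
    simpa [hh] using this
  have bound : ∀ s ∈ Icc c d, ‖g s‖ ≤ Rm := by
    intro s hs
    rcases le_total t₀ s with h | h
    · exact bound_right s ⟨h, hs.2⟩
    · exact bound_left s ⟨hs.1, h⟩
  refine ⟨g, hg0, fun t ht => ?_⟩
  have h2 := hg t ht
  simp only [hv] at h2
  rwa [ballRetract_eq_self (bound t ht)] at h2



lemma linear_ode_agree {c d : ℝ} {A : ℝ → E →L[ℝ] E} (hA : ContinuousOn A (Icc c d))
    {f g : ℝ → E} {t₀ : ℝ} (ht₀ : t₀ ∈ Icc c d)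
    (hf : ∀ t ∈ Icc c d, HasDerivWithinAt f (A t (f t)) (Icc c d) t)
    (hg : ∀ t ∈ Icc c d, HasDerivWithinAt g (A t (g t)) (Icc c d) t)
    (heq : f t₀ = g t₀) : EqOn f g (Icc c d) := by
  obtain ⟨C0, hC0⟩ := isCompact_Icc.exists_bound_of_continuousOn hA
  set K : ℝ := max C0 0 with hKdef
  have hK0 : 0 ≤ K := le_max_right _ _
  have hAK : ∀ s ∈ Icc c d, ‖A s‖ ≤ K := fun s hs => le_max_of_le_left (hC0 s hs)
  set clamp : ℝ → ℝ := fun s => min (max s c) d with hclamp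
  have hclampmem : ∀ s, c ≤ d → clamp s ∈ Icc c d := fun s hcd =>
    ⟨le_min (le_max_right _ _) hcd, min_le_right _ _⟩
  have hcd : c ≤ d := ht₀.1.trans ht₀.2
  have hclampeq : ∀ s ∈ Icc c d, clamp s = s := by
    intro s hs
    simp only [hclamp]
    rw [max_eq_left hs.1, min_eq_left hs.2]
  set w : ℝ → E → E := fun s x => A (clamp s) x with hw
  have hlip : ∀ t : ℝ, LipschitzWith K.toNNReal (w t) := by
    intro t
    apply LipschitzWith.weaken (A (clamp t)).lipschitz
    rw [← NNReal.coe_le_coe, Real.coe_toNNReal _ hK0]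
    exact hAK _ (hclampmem t hcd)
  have upgrade_right : ∀ (h : ℝ → E) (hh : ∀ t ∈ Icc c d, HasDerivWithinAt h (A t (h t)) (Icc c d) t),
      ∀ u ∈ Ico t₀ d, HasDerivWithinAt h (w u (h u)) (Ici u) u := by
    intro h hh u hu
    have humem : u ∈ Icc c d := ⟨ht₀.1.trans hu.1, hu.2.le⟩
    have hst : Icc c d ∈ nhdsWithin u (Ici u) := by
      rw [mem_nhdsWithin]
      exact ⟨Iio d, isOpen_Iio, hu.2, fun s hs => ⟨humem.1.trans hs.2, hs.1.le⟩⟩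
    have h2 := (hh u humem).mono_of_mem_nhdsWithin hst
    show HasDerivWithinAt h (A (clamp u) (h u)) (Ici u) u
    rw [hclampeq u humem]
    exact h2
  have upgrade_left : ∀ (h : ℝ → E) (hh : ∀ t ∈ Icc c d, HasDerivWithinAt h (A t (h t)) (Icc c d) t),
      ∀ u ∈ Ioc c t₀, HasDerivWithinAt h (w u (h u)) (Iic u) u := by
    intro h hh u hu
    have humem : u ∈ Icc c d := ⟨hu.1.le, hu.2.trans ht₀.2⟩
    have hst : Icc c d ∈ nhdsWithin u (Iic u) := by
      rw [mem_nhdsWithin]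
      exact ⟨Ioi c, isOpen_Ioi, hu.1, fun s hs => ⟨hs.1.le, hs.2.trans humem.2⟩⟩
    have h2 := (hh u humem).mono_of_mem_nhdsWithin hst
    show HasDerivWithinAt h (A (clamp u) (h u)) (Iic u) u
    rw [hclampeq u humem]
    exact h2
  have hfc : ContinuousOn f (Icc c d) := fun s hs => (hf s hs).continuousWithinAt
  have hgc : ContinuousOn g (Icc c d) := fun s hs => (hg s hs).continuousWithinAt
  have right : EqOn f g (Icc t₀ d) :=
    ODE_solution_unique (v := w) hlip
      (hfc.mono (Icc_subset_Icc_left ht₀.1)) (upgrade_right f hf)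
      (hgc.mono (Icc_subset_Icc_left ht₀.1)) (upgrade_right g hg) heq
  have left : EqOn f g (Icc c t₀) :=
    ODE_solution_unique_of_mem_Icc_left (v := w) (s := fun _ => univ)
      (fun t _ => (hlip t).lipschitzOnWith)
      (hfc.mono (Icc_subset_Icc_right ht₀.2)) (upgrade_left f hf) (fun _ _ => trivial)
      (hgc.mono (Icc_subset_Icc_right ht₀.2)) (upgrade_left g hg) (fun _ _ => trivial) heq
  intro t ht
  rcases le_total t t₀ with h | h
  · exact left ⟨ht.1, h⟩
  · exact right ⟨h, ht.2⟩

lemma exists_encl {I : Set ℝ} (hIo : IsOpen I) (hIc : I.OrdConnected) {t₀ t : ℝ}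
    (ht₀ : t₀ ∈ I) (ht : t ∈ I) :
    ∃ c d : ℝ, c < min t₀ t ∧ max t₀ t < d ∧ Icc c d ⊆ I := by
  have hmin : min t₀ t ∈ I := by rcases le_total t₀ t with h | h <;> simp [min_eq_left, min_eq_right, h, ht₀, ht]
  have hmax : max t₀ t ∈ I := by rcases le_total t₀ t with h | h <;> simp [max_eq_left, max_eq_right, h, ht₀, ht]
  obtain ⟨ε₁, hε₁, hball₁⟩ := Metric.isOpen_iff.1 hIo _ hmin
  obtain ⟨ε₂, hε₂, hball₂⟩ := Metric.isOpen_iff.1 hIo _ hmax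
  refine ⟨min t₀ t - ε₁ / 2, max t₀ t + ε₂ / 2, by linarith, by linarith, ?_⟩
  apply hIc.out
  · apply hball₁
    rw [Metric.mem_ball, Real.dist_eq,
      show min t₀ t - ε₁ / 2 - min t₀ t = -(ε₁ / 2) by ring, abs_neg,
      abs_of_nonneg (by linarith)]
    linarith
  · apply hball₂
    rw [Metric.mem_ball, Real.dist_eq,
      show max t₀ t + ε₂ / 2 - max t₀ t = ε₂ / 2 by ring,
      abs_of_nonneg (by linarith)]
    linarith

lemma linear_ode_global [CompleteSpace E] {I : Set ℝ} (hIo : IsOpen I) (hIc : I.OrdConnected)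
    {A : ℝ → E →L[ℝ] E} (hA : ContinuousOn A I) {t₀ : ℝ} (ht₀ : t₀ ∈ I) (x₀ : E) :
    ∃ f : ℝ → E, f t₀ = x₀ ∧ ∀ t ∈ I, HasDerivAt f (A t (f t)) t := by
  have hsub : ∀ t ∈ I, Icc (min t₀ t) (max t₀ t) ⊆ I := by
    intro t ht
    apply hIc.out
    · rcases le_total t₀ t with h | h <;> simp [min_eq_left, min_eq_right, h, ht₀, ht]
    · rcases le_total t₀ t with h | h <;> simp [max_eq_left, max_eq_right, h, ht₀, ht]
  have hsol : ∀ t : ℝ, t ∈ I → ∃ g : ℝ → E, g t₀ = x₀ ∧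
      ∀ s ∈ Icc (min t₀ t) (max t₀ t),
        HasDerivWithinAt g (A s (g s)) (Icc (min t₀ t) (max t₀ t)) s := by
    intro t ht
    exact linear_ode_exists_Icc (min_le_left _ _) (le_max_left _ _) A
      (hA.mono (hsub t ht)) x₀
  classical
  set f : ℝ → E := fun t => if h : t ∈ I then Classical.choose (hsol t h) t else x₀ with hfdef
  have hf₀ : f t₀ = x₀ := by
    rw [hfdef]
    simp only [ht₀, dif_pos]
    exact (Classical.choose_spec (hsol t₀ ht₀)).1
  refine ⟨f, hf₀, ?_⟩
  intro t ht
  obtain ⟨c, d, hc, hd, hcdI⟩ := exists_encl hIo hIc ht₀ ht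
  have hct₀ : c ≤ t₀ := le_trans hc.le (min_le_left _ _)
  have ht₀d : t₀ ≤ d := le_trans (le_max_left t₀ t) hd.le
  obtain ⟨G, hG0, hG⟩ := linear_ode_exists_Icc hct₀ ht₀d A (hA.mono hcdI) x₀
  have key : ∀ s ∈ Ioo c d, f s = G s := by
    intro s hs
    have hsI : s ∈ I := hcdI (Ioo_subset_Icc_self hs)
    have hspec := Classical.choose_spec (hsol s hsI)
    set gs := Classical.choose (hsol s hsI) with hgs
    have hJsub : Icc (min t₀ s) (max t₀ s) ⊆ Icc c d := by
      apply Icc_subset_Icc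
      · rcases le_total t₀ s with h | h <;> simp [min_eq_left, min_eq_right, h] <;> linarith [hs.1, hs.2]
      · rcases le_total t₀ s with h | h <;> simp [max_eq_left, max_eq_right, h] <;> linarith [hs.1, hs.2]
    have hagree : EqOn gs G (Icc (min t₀ s) (max t₀ s)) := by
      apply linear_ode_agree (hA.mono ((hJsub).trans hcdI))
        (t₀ := t₀) ⟨min_le_left _ _, le_max_left _ _⟩ hspec.2
        (fun u hu => (hG u (hJsub hu)).mono hJsub)
        (by rw [hspec.1, hG0])
    have hfs : f s = gs s := by rw [hfdef]; simp only [hsI, dif_pos]; rfl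
    rw [hfs]
    exact hagree ⟨min_le_right _ _, le_max_right _ _⟩
  have htIoo : t ∈ Ioo c d := ⟨lt_of_lt_of_le hc (min_le_right _ _), lt_of_le_of_lt (le_max_right t₀ t) hd⟩
  have hGt : HasDerivAt G (A t (G t)) t :=
    (hG t (Ioo_subset_Icc_self htIoo)).hasDerivAt (Icc_mem_nhds htIoo.1 htIoo.2)
  have hev : f =ᶠ[nhds t] G :=
    Filter.eventuallyEq_of_mem (Ioo_mem_nhds htIoo.1 htIoo.2) key
  have := hGt.congr_of_eventuallyEq hev
  rwa [← key t htIoo] at this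

lemma linear_ode_unique_global [CompleteSpace E] {I : Set ℝ} (hIc : I.OrdConnected)
    {A : ℝ → E →L[ℝ] E} (hA : ContinuousOn A I) {f g : ℝ → E} {t₀ : ℝ} (ht₀ : t₀ ∈ I)
    (hf : ∀ t ∈ I, HasDerivAt f (A t (f t)) t)
    (hg : ∀ t ∈ I, HasDerivAt g (A t (g t)) t)
    (heq : f t₀ = g t₀) : ∀ t ∈ I, f t = g t := by
  intro t ht
  have hsub : Icc (min t₀ t) (max t₀ t) ⊆ I := by
    apply hIc.out
    · rcases le_total t₀ t with h | h <;> simp [min_eq_left, min_eq_right, h, ht₀, ht]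
    · rcases le_total t₀ t with h | h <;> simp [max_eq_left, max_eq_right, h, ht₀, ht]
  have := linear_ode_agree (hA.mono hsub) (t₀ := t₀) ⟨min_le_left _ _, le_max_left _ _⟩
    (fun u hu => (hf u (hsub hu)).hasDerivWithinAt)
    (fun u hu => (hg u (hsub hu)).hasDerivWithinAt) heq
  exact this ⟨min_le_right _ _, le_max_right _ _⟩

lemma linear_ode_contDiffOn {I : Set ℝ} (hIo : IsOpen I) {A : ℝ → E →L[ℝ] E}
    (hA : ContDiffOn ℝ (⊤ : ℕ∞) A I) {f : ℝ → E}
    (hf : ∀ t ∈ I, HasDerivAt f (A t (f t)) t) : ContDiffOn ℝ (⊤ : ℕ∞) f I := by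
  have key : ∀ n : ℕ, ContDiffOn ℝ n f I := by
    intro n
    induction n with
    | zero =>
      rw [Nat.cast_zero, contDiffOn_zero]
      exact continuousOn_of_forall_continuousAt fun t ht => (hf t ht).continuousAt
    | succ n ih =>
      rw [show ((n + 1 : ℕ) : WithTop ℕ∞) = (n : WithTop ℕ∞) + 1 by push_cast; rfl,
        contDiffOn_succ_iff_deriv_of_isOpen hIo]
      refine ⟨fun t ht => (hf t ht).differentiableAt.differentiableWithinAt, ?_, ?_⟩
      · intro h; exact absurd h (by exact_mod_cast (by simp : (n : WithTop ℕ∞) ≠ ⊤))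
      · apply ContDiffOn.congr (((hA.of_le (mod_cast le_top)).clm_apply ih))
        intro t ht
        exact (hf t ht).deriv
  exact contDiffOn_infty.mpr key


end ODEAux

lemma lcross_eq (x y z : Fin 4 → ℝ) : lcross x y z = ![
    -(x 1*y 2*z 3) + x 1*y 3*z 2 + x 2*y 1*z 3 - x 2*y 3*z 1 - x 3*y 1*z 2 + x 3*y 2*z 1,
    -(x 0*y 2*z 3) + x 0*y 3*z 2 + x 2*y 0*z 3 - x 2*y 3*z 0 - x 3*y 0*z 2 + x 3*y 2*z 0,
    x 0*y 1*z 3 - x 0*y 3*z 1 - x 1*y 0*z 3 + x 1*y 3*z 0 + x 3*y 0*z 1 - x 3*y 1*z 0,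
    -(x 0*y 1*z 2) + x 0*y 2*z 1 + x 1*y 0*z 2 - x 1*y 2*z 0 - x 2*y 0*z 1 + x 2*y 1*z 0] := by
  funext i
  fin_cases i <;>
  · simp [lcross, Matrix.det_succ_row_zero, Fin.sum_univ_succ, Matrix.det_fin_three, Fin.succAbove]
    ring


lemma mink_lcross (w x y z : Fin 4 → ℝ) : mink w (lcross x y z) =
    w 0 * x 1 * y 2 * z 3 - w 0 * x 1 * y 3 * z 2 - w 0 * x 2 * y 1 * z 3 + w 0 * x 2 * y 3 * z 1 + w 0 * x 3 * y 1 * z 2 - w 0 * x 3 * y 2 * z 1 - w 1 * x 0 * y 2 * z 3 + w 1 * x 0 * y 3 * z 2 + w 1 * x 2 * y 0 * z 3 - w 1 * x 2 * y 3 * z 0 - w 1 * x 3 * y 0 * z 2 + w 1 * x 3 * y 2 * z 0 + w 2 * x 0 * y 1 * z 3 - w 2 * x 0 * y 3 * z 1 - w 2 * x 1 * y 0 * z 3 + w 2 * x 1 * y 3 * z 0 + w 2 * x 3 * y 0 * z 1 - w 2 * x 3 * y 1 * z 0 - w 3 * x 0 * y 1 * z 2 + w 3 * x 0 * y 2 *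 z 1 + w 3 * x 1 * y 0 * z 2 - w 3 * x 1 * y 2 * z 0 - w 3 * x 2 * y 0 * z 1 + w 3 * x 2 * y 1 * z 0 := by
  rw [lcross_eq]
  simp [mink]
  ring

lemma hasDerivAt_mink {t : ℝ} {u w : ℝ → Fin 4 → ℝ} {u' w' : Fin 4 → ℝ}
    (hu : HasDerivAt u u' t) (hw : HasDerivAt w w' t) :
    HasDerivAt (fun s => mink (u s) (w s)) (mink u' (w t) + mink (u t) w') t := by
  have hu_ : ∀ k : Fin 4, HasDerivAt (fun s => u s k) (u' k) t := fun k => hasDerivAt_pi.mp hu k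
  have hw_ : ∀ k : Fin 4, HasDerivAt (fun s => w s k) (w' k) t := fun k => hasDerivAt_pi.mp hw k
  have E1 : (fun s => mink (u s) (w s)) =
      (fun s => -(u s 0 * w s 0) + u s 1 * w s 1 + u s 2 * w s 2 + u s 3 * w s 3) := by
    funext s; rw [mink]
  rw [E1]
  apply HasDerivAt.congr_deriv (((((hu_ 0).mul (hw_ 0)).neg.add ((hu_ 1).mul (hw_ 1))).add
    ((hu_ 2).mul (hw_ 2))).add ((hu_ 3).mul (hw_ 3)))
  simp [mink]
  ring

lemma hasDerivAt_mink_lcross {t : ℝ} {w p q r : ℝ → Fin 4 → ℝ} {w' p' q' r' : Fin 4 → ℝ}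
    (hw : HasDerivAt w w' t) (hp : HasDerivAt p p' t)
    (hq : HasDerivAt q q' t) (hr : HasDerivAt r r' t) :
    HasDerivAt (fun s => mink (w s) (lcross (p s) (q s) (r s)))
      (mink w' (lcross (p t) (q t) (r t)) + mink (w t) (lcross p' (q t) (r t)) +
        mink (w t) (lcross (p t) q' (r t)) + mink (w t) (lcross (p t) (q t) r')) t := by
  have hw_ : ∀ k : Fin 4, HasDerivAt (fun s => w s k) (w' k) t := fun k => hasDerivAt_pi.mp hw k
  have hp_ : ∀ k : Fin 4, HasDerivAt (fun s => p s k) (p' k) t := fun k => hasDerivAt_pi.mp hp k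
  have hq_ : ∀ k : Fin 4, HasDerivAt (fun s => q s k) (q' k) t := fun k => hasDerivAt_pi.mp hq k
  have hr_ : ∀ k : Fin 4, HasDerivAt (fun s => r s k) (r' k) t := fun k => hasDerivAt_pi.mp hr k
  have E1 : (fun s => mink (w s) (lcross (p s) (q s) (r s))) =
      (fun s => w s 0 * (p s 1 * (q s 2 * r s 3)) - w s 0 * (p s 1 * (q s 3 * r s 2)) - w s 0 * (p s 2 * (q s 1 * r s 3)) + w s 0 * (p s 2 * (q s 3 * r s 1)) + w s 0 * (p s 3 * (q s 1 * r s 2)) - w s 0 * (p s 3 * (q s 2 * r s 1)) - w s 1 * (p s 0 * (q s 2 * r s 3)) + w s 1 * (p s 0 * (q s 3 * r s 2)) + w s 1 * (p s 2 * (q s 0 * r s 3)) - w s 1 * (p s 2 * (q s 3 * r s 0)) - w s 1 * (p s 3 * (q s 0 * r s 2)) + w s 1 * (p s 3 * (q s 2 * r s 0)) + w s 2 * (p s 0 * (q s 1 * r s 3)) - w s 2 * (p s 0 * (q s 3 * r s 1)) - w s 2 * (p s 1 * (q s 0 * r s 3)) + w s 2 * (p s 1 * (q s 3 * r s 0)) +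 w s 2 * (p s 3 * (q s 0 * r s 1)) - w s 2 * (p s 3 * (q s 1 * r s 0)) - w s 3 * (p s 0 * (q s 1 * r s 2)) + w s 3 * (p s 0 * (q s 2 * r s 1)) + w s 3 * (p s 1 * (q s 0 * r s 2)) - w s 3 * (p s 1 * (q s 2 * r s 0)) - w s 3 * (p s 2 * (q s 0 * r s 1)) + w s 3 * (p s 2 * (q s 1 * r s 0))) := by
    funext s
    rw [mink_lcross]
    ring
  rw [E1]
  apply HasDerivAt.congr_deriv (((((((((((((((((((((((((hw_ 0).mul ((hp_ 1).mul ((hq_ 2).mul (hr_ 3)))).sub ((hw_ 0).mul ((hp_ 1).mul ((hq_ 3).mul (hr_ 2))))).sub ((hw_ 0).mul ((hp_ 2).mul ((hq_ 1).mul (hr_ 3))))).add ((hw_ 0).mul ((hp_ 2).mul ((hq_ 3).mul (hr_ 1))))).add ((hw_ 0).mul ((hp_ 3).mul ((hq_ 1).mul (hr_ 2))))).sub ((hw_ 0).mul ((hp_ 3).mul ((hq_ 2).mul (hr_ 1))))).sub ((hw_ 1).mul ((hp_ 0).mul ((hq_ 2).mul (hr_ 3))))).add ((hw_ 1).mul ((hp_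 0).mul ((hq_ 3).mul (hr_ 2))))).add ((hw_ 1).mul ((hp_ 2).mul ((hq_ 0).mul (hr_ 3))))).sub ((hw_ 1).mul ((hp_ 2).mul ((hq_ 3).mul (hr_ 0))))).sub ((hw_ 1).mul ((hp_ 3).mul ((hq_ 0).mul (hr_ 2))))).add ((hw_ 1).mul ((hp_ 3).mul ((hq_ 2).mul (hr_ 0))))).add ((hw_ 2).mul ((hp_ 0).mul ((hq_ 1).mul (hr_ 3))))).sub ((hw_ 2).mul ((hp_ 0).mul ((hq_ 3).mul (hr_ 1))))).sub ((hw_ 2).mul ((hp_ 1).mul ((hq_ 0).mul (hr_ 3))))).add ((hw_ 2).mul ((hp_ 1).mul ((hq_ 3).mul (hr_ 0))))).add ((hw_ 2).mul ((hp_ 3).mul ((hq_ 0).mul (hr_ 1))))).sub ((hw_ 2).mul ((hp_ 3).mul ((hq_ 1).mul (hr_ 0))))).sub ((hw_ 3).mul ((hp_ 0).mul ((hq_ 1).mul (hr_ 2))))).add ((hw_ 3).mul ((hp_ 0).mul ((hq_ 2).mul (hr_ 1))))).add ((hw_ 3).mul ((hp_ 1).mul ((hq_ 0).mul (hr_ 2))))).sub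 ((hw_ 3).mul ((hp_ 1).mul ((hq_ 2).mul (hr_ 0))))).sub ((hw_ 3).mul ((hp_ 2).mul ((hq_ 0).mul (hr_ 1))))).add ((hw_ 3).mul ((hp_ 2).mul ((hq_ 1).mul (hr_ 0)))))
  simp only [mink_lcross, lcross_eq]
  simp [mink]
  ring


abbrev E4 := Fin 4 → Fin 4 → ℝ

def rowMix (C : Fin 4 → Fin 4 → ℝ) : E4 →L[ℝ] E4 :=
  ContinuousLinearMap.pi (fun i => ∑ k : Fin 4, C i k • ContinuousLinearMap.proj k)

lemma rowMix_apply (C : Fin 4 → Fin 4 → ℝ) (X : E4) (i j : Fin 4) :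
    rowMix C X i j = ∑ k : Fin 4, C i k * X k j := by
  simp [rowMix, ContinuousLinearMap.pi_apply, ContinuousLinearMap.sum_apply,
    ContinuousLinearMap.smul_apply, ContinuousLinearMap.proj_apply, Finset.sum_apply,
    Pi.smul_apply, smul_eq_mul]

def ent (k l : Fin 4) : E4 →L[ℝ] ℝ :=
  (ContinuousLinearMap.proj (R := ℝ) (φ := fun _ : Fin 4 => ℝ) l).comp
    (ContinuousLinearMap.proj (R := ℝ) (φ := fun _ : Fin 4 => (Fin 4 → ℝ)) k)

def gramMix (C : Fin 4 → Fin 4 → ℝ) : E4 →L[ℝ] E4 :=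
  ContinuousLinearMap.pi (fun i => ContinuousLinearMap.pi (fun j =>
    ∑ k : Fin 4, (C i k • ent k j + C j k • ent i k)))

lemma gramMix_apply (C : Fin 4 → Fin 4 → ℝ) (X : E4) (i j : Fin 4) :
    gramMix C X i j = ∑ k : Fin 4, (C i k * X k j + C j k * X i k) := by
  simp [gramMix, ent, ContinuousLinearMap.pi_apply, ContinuousLinearMap.sum_apply,
    ContinuousLinearMap.smul_apply, ContinuousLinearMap.proj_apply, Finset.sum_apply,
    ContinuousLinearMap.add_apply, ContinuousLinearMap.comp_apply,
    Pi.smul_apply, smul_eq_mul]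

def Cof (mv nv av bv : ℝ) : Fin 4 → Fin 4 → ℝ :=
  ![![0,0,0,mv],![0,0,nv,av],![0,-nv,0,bv],![mv,-av,-bv,0]]

def Cm : Fin 4 → Fin 4 → ℝ := Cof 1 0 0 0
def Cn : Fin 4 → Fin 4 → ℝ := Cof 0 1 0 0
def Ca : Fin 4 → Fin 4 → ℝ := Cof 0 0 1 0
def Cb : Fin 4 → Fin 4 → ℝ := Cof 0 0 0 1

lemma Cof_decomp (mv nv av bv : ℝ) (i k : Fin 4) :
    Cof mv nv av bv i k = mv * Cm i k + nv * Cn i k + av * Ca i k + bv * Cb i k := by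
  fin_cases i <;> fin_cases k <;> norm_num [Cof, Cm, Cn, Ca, Cb]

lemma rowMix_Cof (mv nv av bv : ℝ) :
    rowMix (Cof mv nv av bv) =
      mv • rowMix Cm + nv • rowMix Cn + av • rowMix Ca + bv • rowMix Cb := by
  apply ContinuousLinearMap.ext
  intro X
  funext i j
  simp only [ContinuousLinearMap.add_apply, ContinuousLinearMap.smul_apply, Pi.add_apply,
    Pi.smul_apply, smul_eq_mul, rowMix_apply]
  rw [Finset.mul_sum, Finset.mul_sum, Finset.mul_sum, Finset.mul_sum,
    ← Finset.sum_add_distrib, ← Finset.sum_add_distrib, ← Finset.sum_add_distrib]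
  apply Finset.sum_congr rfl
  intro k _
  rw [Cof_decomp]
  ring

lemma gramMix_Cof (mv nv av bv : ℝ) :
    gramMix (Cof mv nv av bv) =
      mv • gramMix Cm + nv • gramMix Cn + av • gramMix Ca + bv • gramMix Cb := by
  apply ContinuousLinearMap.ext
  intro X
  funext i j
  simp only [ContinuousLinearMap.add_apply, ContinuousLinearMap.smul_apply, Pi.add_apply,
    Pi.smul_apply, smul_eq_mul, gramMix_apply]
  rw [Finset.mul_sum, Finset.mul_sum, Finset.mul_sum, Finset.mul_sum,
    ← Finset.sum_add_distrib, ← Finset.sum_add_distrib, ← Finset.sum_add_distrib]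
  apply Finset.sum_congr rfl
  intro k _
  rw [Cof_decomp mv nv av bv i k, Cof_decomp mv nv av bv j k]
  ring

lemma Lf_row0 (mv nv av bv : ℝ) (X : E4) :
    rowMix (Cof mv nv av bv) X 0 = fun l => mv * X 3 l := by
  funext l
  rw [rowMix_apply, Fin.sum_univ_four]
  simp [Cof]

lemma Lf_row1 (mv nv av bv : ℝ) (X : E4) :
    rowMix (Cof mv nv av bv) X 1 = fun l => nv * X 2 l + av * X 3 l := by
  funext l
  rw [rowMix_apply, Fin.sum_univ_four]
  simp [Cof]

lemma Lf_row2 (mv nv av bv : ℝ) (X : E4) :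
    rowMix (Cof mv nv av bv) X 2 = fun l => -nv * X 1 l + bv * X 3 l := by
  funext l
  rw [rowMix_apply, Fin.sum_univ_four]
  simp [Cof]

lemma Lf_row3 (mv nv av bv : ℝ) (X : E4) :
    rowMix (Cof mv nv av bv) X 3 = fun l => mv * X 0 l - av * X 1 l - bv * X 2 l := by
  funext l
  rw [rowMix_apply, Fin.sum_univ_four]
  simp [Cof]
  ring

def etaM : E4 := ![![(-1:ℝ),0,0,0],![0,1,0,0],![0,0,1,0],![0,0,0,1]]

lemma gramMix_eta (mv nv av bv : ℝ) : gramMix (Cof mv nv av bv) etaM = 0 := by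
  funext i j
  rw [gramMix_apply, Fin.sum_univ_four]
  fin_cases i <;> fin_cases j <;> simp [Cof, etaM, Matrix.vecHead, Matrix.vecTail] <;> ring

lemma mink_sum_left (c : Fin 4 → ℝ) (x : Fin 4 → Fin 4 → ℝ) (y : Fin 4 → ℝ) :
    mink (fun l => ∑ k : Fin 4, c k * x k l) y = ∑ k : Fin 4, c k * mink (x k) y := by
  simp [mink, Fin.sum_univ_four]
  ring

lemma mink_sum_right (c : Fin 4 → ℝ) (x : Fin 4 → Fin 4 → ℝ) (y : Fin 4 → ℝ) :
    mink y (fun l => ∑ k : Fin 4, c k * x k l) = ∑ k : Fin 4, c k * mink y (x k) := by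
  simp [mink, Fin.sum_univ_four]
  ring

lemma mink_smul1 (c : ℝ) (x y : Fin 4 → ℝ) : mink (fun l => c * x l) y = c * mink x y := by
  simp [mink]; ring

lemma mink_comb2 (c1 c2 : ℝ) (x1 x2 y : Fin 4 → ℝ) :
    mink (fun l => c1 * x1 l + c2 * x2 l) y = c1 * mink x1 y + c2 * mink x2 y := by
  simp [mink]; ring

lemma mink_comb3 (c1 c2 c3 : ℝ) (x1 x2 x3 y : Fin 4 → ℝ) :
    mink (fun l => c1 * x1 l - c2 * x2 l - c3 * x3 l) y
      = c1 * mink x1 y - c2 * mink x2 y - c3 * mink x3 y := by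
  simp [mink]; ring


lemma mink_lcross_self2 (x y z : Fin 4 → ℝ) : mink y (lcross x y z) = 0 := by
  rw [mink_lcross]; ring

lemma mink_lcross_self3 (x y z : Fin 4 → ℝ) : mink z (lcross x y z) = 0 := by
  rw [mink_lcross]; ring

def F₀ : E4 := ![![1,0,0,0],![0,1,0,0],![0,0,1,0],![0,0,0,-1]]



theorem existence_of_hyperbolic_framed_curves
    (I : Set ℝ) (hIo : IsOpen I) (hIc : I.OrdConnected)
    (m n a b : ℝ → ℝ)
    (hm : ContDiffOn ℝ (⊤ : ℕ∞) m I) (hn : ContDiffOn ℝ (⊤ : ℕ∞) n I)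
    (ha : ContDiffOn ℝ (⊤ : ℕ∞) a I) (hb : ContDiffOn ℝ (⊤ : ℕ∞) b I) :
    ∃ γ v₁ v₂ : ℝ → Fin 4 → ℝ,
      IsHypFramed I γ v₁ v₂ ∧ HasCurv I γ v₁ v₂ m n a b := by
  rcases I.eq_empty_or_nonempty with hI | ⟨t₀, ht₀⟩
  · subst hI
    exact ⟨fun _ => ![1,0,0,0], fun _ => ![0,1,0,0], fun _ => ![0,0,1,0],
      ⟨fun x hx => hx.elim, fun x hx => hx.elim, fun x hx => hx.elim,
        fun t ht => ht.elim⟩, fun t ht => ht.elim⟩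
  have hLf_smooth : ContDiffOn ℝ (⊤ : ℕ∞)
      (fun t => rowMix (Cof (m t) (n t) (a t) (b t))) I := by
    have e : (fun t => rowMix (Cof (m t) (n t) (a t) (b t))) =
        fun t => m t • rowMix Cm + n t • rowMix Cn + a t • rowMix Ca + b t • rowMix Cb := by
      funext t; rw [rowMix_Cof]
    rw [e]
    exact (((hm.smul contDiffOn_const).add (hn.smul contDiffOn_const)).add
      (ha.smul contDiffOn_const)).add (hb.smul contDiffOn_const)
  have hLg_smooth : ContDiffOn ℝ (⊤ : ℕ∞)
      (fun t => gramMix (Cof (m t) (n t) (a t) (b t))) I := by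
    have e : (fun t => gramMix (Cof (m t) (n t) (a t) (b t))) =
        fun t => m t • gramMix Cm + n t • gramMix Cn + a t • gramMix Ca + b t • gramMix Cb := by
      funext t; rw [gramMix_Cof]
    rw [e]
    exact (((hm.smul contDiffOn_const).add (hn.smul contDiffOn_const)).add
      (ha.smul contDiffOn_const)).add (hb.smul contDiffOn_const)
  obtain ⟨F, hF0, hF⟩ := linear_ode_global (E := E4) hIo hIc hLf_smooth.continuousOn ht₀ F₀
  have hFs : ContDiffOn ℝ (⊤ : ℕ∞) F I := linear_ode_contDiffOn hIo hLf_smooth hF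
  have hrow : ∀ t ∈ I, ∀ i : Fin 4,
      HasDerivAt (fun s => F s i) (rowMix (Cof (m t) (n t) (a t) (b t)) (F t) i) t :=
    fun t ht i => hasDerivAt_pi.mp (hF t ht) i
  -- Gram matrix evolution
  have hGd : ∀ t ∈ I, HasDerivAt (fun s => (fun i j => mink (F s i) (F s j)))
      (gramMix (Cof (m t) (n t) (a t) (b t)) (fun i j => mink (F t i) (F t j))) t := by
    intro t ht
    apply hasDerivAt_pi.mpr
    intro i
    apply hasDerivAt_pi.mpr
    intro j
    have h := hasDerivAt_mink (hrow t ht i) (hrow t ht j)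
    apply h.congr_deriv
    have e1 : rowMix (Cof (m t) (n t) (a t) (b t)) (F t) i =
        fun l => ∑ k : Fin 4, Cof (m t) (n t) (a t) (b t) i k * F t k l := by
      funext l; exact rowMix_apply _ _ _ _
    have e2 : rowMix (Cof (m t) (n t) (a t) (b t)) (F t) j =
        fun l => ∑ k : Fin 4, Cof (m t) (n t) (a t) (b t) j k * F t k l := by
      funext l; exact rowMix_apply _ _ _ _
    rw [e1, e2, mink_sum_left, mink_sum_right, gramMix_apply, Finset.sum_add_distrib]
  have hGconst : ∀ t ∈ I, (fun i j => mink (F t i) (F t j)) = etaM := by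
    apply linear_ode_unique_global (E := E4) hIc hLg_smooth.continuousOn ht₀ hGd
      (g := fun _ => etaM)
    · intro t ht
      exact (hasDerivAt_const t etaM).congr_deriv (gramMix_eta _ _ _ _).symm
    · rw [hF0]
      funext i j
      fin_cases i <;> fin_cases j <;>
        simp [mink, F₀, etaM, Matrix.vecHead, Matrix.vecTail]
  have gval : ∀ t ∈ I, ∀ i j : Fin 4, mink (F t i) (F t j) = etaM i j :=
    fun t ht i j => congrFun (congrFun (hGconst t ht) i) j
  -- the lcross pairing is constant equal to 1
  have hcd : ∀ t ∈ I,
      HasDerivAt (fun s => mink (F s 3) (lcross (F s 0) (F s 1) (F s 2))) 0 t := by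
    intro t ht
    have h := hasDerivAt_mink_lcross (hrow t ht 3) (hrow t ht 0) (hrow t ht 1) (hrow t ht 2)
    apply h.congr_deriv
    rw [Lf_row0, Lf_row1, Lf_row2, Lf_row3]
    simp only [mink_lcross]
    ring
  have hc1 : ∀ t ∈ I, mink (F t 3) (lcross (F t 0) (F t 1) (F t 2)) = 1 := by
    intro t ht
    have hconst := Convex.is_const_of_fderivWithin_eq_zero (𝕜 := ℝ)
      (convex_iff_ordConnected.mpr hIc)
      (fun s hs => ((hcd s hs).differentiableAt).differentiableWithinAt)
      (fun s hs => by
        have h0 : HasFDerivAt (fun s => mink (F s 3) (lcross (F s 0) (F s 1) (F s 2)))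
            (0 : ℝ →L[ℝ] ℝ) s := by
          have := (hcd s hs).hasFDerivAt
          simpa using this
        rw [fderivWithin_of_isOpen hIo hs, h0.fderiv]) ht ht₀
    rw [hconst, hF0]
    rw [mink_lcross]
    simp [F₀, Matrix.vecHead, Matrix.vecTail]
  -- assemble
  refine ⟨fun s => F s 0, fun s => F s 1, fun s => F s 2, ⟨?_, ?_, ?_, ?_⟩, ?_⟩
  · exact (ContinuousLinearMap.proj (R := ℝ) (φ := fun _ : Fin 4 => (Fin 4 → ℝ))
      (0 : Fin 4)).contDiff.comp_contDiffOn hFs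
  · exact (ContinuousLinearMap.proj (R := ℝ) (φ := fun _ : Fin 4 => (Fin 4 → ℝ))
      (1 : Fin 4)).contDiff.comp_contDiffOn hFs
  · exact (ContinuousLinearMap.proj (R := ℝ) (φ := fun _ : Fin 4 => (Fin 4 → ℝ))
      (2 : Fin 4)).contDiff.comp_contDiffOn hFs
  · intro t ht
    have hd0 : deriv (fun s => F s 0) t = fun l => m t * F t 3 l := by
      rw [(hrow t ht 0).deriv, Lf_row0]
    refine ⟨?_, ?_, ?_, ?_, ?_, ?_, ?_, ?_⟩
    · rw [gval t ht 0 0]; norm_num [etaM, Matrix.vecHead, Matrix.vecTail]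
    · rw [gval t ht 1 1]; norm_num [etaM, Matrix.vecHead, Matrix.vecTail]
    · rw [gval t ht 2 2]; simp [etaM, Matrix.vecHead, Matrix.vecTail]
    · rw [gval t ht 1 2]; simp [etaM, Matrix.vecHead, Matrix.vecTail]
    · rw [gval t ht 0 1]; norm_num [etaM, Matrix.vecHead, Matrix.vecTail]
    · rw [gval t ht 0 2]; simp [etaM, Matrix.vecHead, Matrix.vecTail]
    · rw [hd0, mink_smul1, gval t ht 3 1]
      simp [etaM, Matrix.vecHead, Matrix.vecTail]
    · rw [hd0, mink_smul1, gval t ht 3 2]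
      simp [etaM, Matrix.vecHead, Matrix.vecTail]
  · intro t ht
    have hd0 : deriv (fun s => F s 0) t = fun l => m t * F t 3 l := by
      rw [(hrow t ht 0).deriv, Lf_row0]
    have hd1 : deriv (fun s => F s 1) t = fun l => n t * F t 2 l + a t * F t 3 l := by
      rw [(hrow t ht 1).deriv, Lf_row1]
    have hd2 : deriv (fun s => F s 2) t = fun l => -(n t) * F t 1 l + b t * F t 3 l := by
      rw [(hrow t ht 2).deriv, Lf_row2]
    refine ⟨?_, ?_, ?_, ?_⟩
    · rw [hd0, mink_smul1, hc1 t ht, mul_one]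
    · rw [hd1, mink_comb2, gval t ht 2 2, gval t ht 3 2]
      simp [etaM, Matrix.vecHead, Matrix.vecTail]
    · rw [hd1, mink_comb2, hc1 t ht, mink_lcross_self3, mul_one]
      ring
    · rw [hd2, mink_comb2, hc1 t ht, mink_lcross_self2, mul_one]
      ring
  done


end
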